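/- Let p_n/q_n = [f₀,…,f_n]_{ev} with p_n, q_n ∈ Ā comaximal, where (f_i) is the continued fraction of z ∈ Ĥ. Then deg(q_n) = Σ_{i=1}^{n} deg(f_i), and ν(z - p_n/q_n) = deg(f_{n+1}) + 2 deg(q_n) whenever f_{n+1} is defined. -/

import Mathlib

universe u

/-- Evaluation of a finite continued fraction `[f₀, f₁, …, f_N]` in a field,
`cfEval [a] = a`, `cfEval (a :: l) = a + (cfEval l)⁻¹` (with the convention `0⁻¹ = 0`). -/
def cfEval {L : Type u} [Field L] : List L → L
  | [] => 0
  | a :: l => a + (cfEval l)⁻¹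

/-- The Moebius maps `ρ_n = σ_n ∘ ⋯ ∘ σ_0`, where `σ_i x = (x - f_i)⁻¹`. -/
def rho {L : Type u} [Field L] (f : ℕ → L) : ℕ → L → L
  | 0, x => (x - f 0)⁻¹
  | n + 1, x => (rho f n x - f (n + 1))⁻¹

/-- The derivative `ρ_n'` of `ρ_n`, computed by the chain rule from
`σ_i'(x) = -((x - f_i)⁻¹)²`. -/
def rho' {L : Type u} [Field L] (f : ℕ → L) : ℕ → L → L
  | 0, x => -((x - f 0)⁻¹) ^ 2
  | n + 1, x => -((rho f n x - f (n + 1))⁻¹) ^ 2 * rho' f n x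

/-- An abstract presentation of the completion `K̂` of the Puiseux field
`E⟨⟨t⁻¹⟩⟩` over a field `E`.  The field `K` carries an additive valuation
`ν` with values in `ℚ` on nonzero elements (normalized by `ν (t^r) = -r`,
where `mono r` plays the role of the monomial `t^r`), the subfield `E` is
embedded via `emb`, the simple "Laurent Puiseux polynomials" (the ring
generated by `E` and all rational powers of `t`) are dense, and `K` is
complete for `ν`. -/
structure PuiseuxCompletion (E : Type u) [Field E] where
  K : Type u
  [fieldK : Field K]
  ν : K → ℚ
  emb : E →+* K
  mono : ℚ → K
  mono_zero : mono 0 = 1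
  mono_mul : ∀ r s : ℚ, mono r * mono s = mono (r + s)
  ν_mono : ∀ r : ℚ, ν (mono r) = -r
  ν_emb : ∀ e : E, e ≠ 0 → ν (emb e) = 0
  ν_mul : ∀ x y : K, x ≠ 0 → y ≠ 0 → ν (x * y) = ν x + ν y
  ν_add : ∀ x y : K, x ≠ 0 → y ≠ 0 → x + y ≠ 0 → min (ν x) (ν y) ≤ ν (x + y)
  dense' : ∀ z : K, ∀ C : ℚ,
    ∃ f ∈ Subring.closure (Set.range emb ∪ Set.range mono), z = f ∨ C < ν (z - f)
  complete' : ∀ uSeq : ℕ → K,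
    (∀ C : ℚ, ∃ N : ℕ, ∀ m ≥ N, ∀ n ≥ N, uSeq m = uSeq n ∨ C < ν (uSeq m - uSeq n)) →
    ∃ z : K, ∀ C : ℚ, ∃ N : ℕ, ∀ n ≥ N, uSeq n = z ∨ C < ν (uSeq n - z)

attribute [instance] PuiseuxCompletion.fieldK

namespace PuiseuxCompletion

variable {E : Type u} [Field E] (P : PuiseuxCompletion E)

/-- The ring `Ā = E⟨t⟩` of Puiseux polynomials: finite `E`-linear combinations of
nonnegative rational powers of `t`. -/
def Abar : Subring P.K :=
  Subring.closure (Set.range P.emb ∪ P.mono '' {r : ℚ | 0 ≤ r})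

/-- `deg f = -ν f`. -/
def deg (f : P.K) : ℚ := -P.ν f

/-- The rational Puiseux field `k̃ = Quot(Ā) = ⋃ₙ E(t^{1/n})`, as a subfield of `K̂`. -/
def ktilde : Subfield P.K := Subfield.closure (P.Abar : Set P.K)

/-- `uSeq n → z` with respect to the valuation `ν`. -/
def TendsTo (uSeq : ℕ → P.K) (z : P.K) : Prop :=
  ∀ C : ℚ, ∃ N : ℕ, ∀ n ≥ N, uSeq n = z ∨ C < P.ν (uSeq n - z)

/-- One step of the continued fraction algorithm succeeds at index `i`:
`f i` is the Puiseux polynomial with `ν (z_i - f i) > 0`, the fraction does not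
end at `i` (`z_i ≠ f i`), and `z_{i+1} = (z_i - f i)⁻¹`. -/
def CFStep (f zs : ℕ → P.K) (i : ℕ) : Prop :=
  f i ∈ P.Abar ∧ 0 < P.ν (zs i - f i) ∧ zs i ≠ f i ∧ zs (i + 1) = (zs i - f i)⁻¹

/-- The `n`-th approximant `x_n = [f₀, …, f_n]_{ev}`. -/
def approx (f : ℕ → P.K) (n : ℕ) : P.K :=
  cfEval (List.ofFn fun i : Fin (n + 1) => f i)

/-- The continued fraction of `z` begins with the coefficients `f 0, …, f n`. -/
def CFBegins (f : ℕ → P.K) (n : ℕ) (z : P.K) : Prop :=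
  ∃ zs : ℕ → P.K, zs 0 = z ∧ (∀ i < n, P.CFStep f zs i) ∧
    f n ∈ P.Abar ∧ (zs n = f n ∨ 0 < P.ν (zs n - f n))

/-- `z` is the value of the continued fraction expression with coefficients `f`
and length `L` (finite or infinite); the coefficients are Puiseux polynomials of
positive degree after the zeroth one. -/
def CFExprEval (f : ℕ → P.K) (L : WithTop ℕ) (z : P.K) : Prop :=
  f 0 ∈ P.Abar ∧
  (∀ i : ℕ, 1 ≤ i → (i : WithTop ℕ) ≤ L → f i ∈ P.Abar ∧ 0 < P.deg (f i)) ∧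
  ((∃ N : ℕ, L = (N : WithTop ℕ) ∧ z = P.approx f N) ∨
    (L = ⊤ ∧ P.TendsTo (fun n => P.approx f n) z))

/-- The equivalence relation `(a, r) ~ (a', r')` iff `r = r'` and `ν (a - a') ≥ r`
(the pairs define the same Berkovich point `η_{a,r}` of type II or III). -/
def ballEquiv (p q : P.K × ℝ) : Prop :=
  p.2 = q.2 ∧ (p.1 = q.1 ∨ p.2 ≤ (P.ν (p.1 - q.1) : ℝ))

open scoped Classical in
/-- The Berkovich hyperbolic distance, computed on representatives. -/
noncomputable def berkDist (p q : P.K × ℝ) : ℝ :=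
  if p.1 = q.1 ∨ min p.2 q.2 ≤ (P.ν (p.1 - q.1) : ℝ) then |p.2 - q.2|
  else p.2 + q.2 - 2 * (P.ν (p.1 - q.1) : ℝ)

/-- The closed ball `B_a^{[r]} = {b : ν (b - a) ≥ r}` corresponding to `η_{a,r}`. -/
def closedBall (a : P.K) (r : ℝ) : Set P.K :=
  {b : P.K | b = a ∨ r ≤ (P.ν (b - a) : ℝ)}

/-- The Moebius transformation associated to a `2 × 2` matrix. -/
def mob (g : Matrix (Fin 2) (Fin 2) P.K) (x : P.K) : P.K :=
  (g 0 0 * x + g 0 1) / (g 1 0 * x + g 1 1)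

/-- The ring `A_M = E[t^{1/M}]`. -/
def AM (M : ℕ) : Subring P.K :=
  Subring.closure (Set.range P.emb ∪ {P.mono (1 / (M : ℚ))})

/-- The field `E(t^{1/M})`, whose `ν`-completion inside `K̂` is `K_M = E((t^{-1/M}))`. -/
def kM (M : ℕ) : Subfield P.K :=
  Subfield.closure (Set.range P.emb ∪ {P.mono (1 / (M : ℚ))})

end PuiseuxCompletion

namespace CFAux

variable {L : Type u} [Field L]

def cfP (f : ℕ → L) : ℕ → L
  | 0 => 1
  | 1 => f 0
  | (k+2) => f (k+1) * cfP f (k+1) + cfP f k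

def cfQ (f : ℕ → L) : ℕ → L
  | 0 => 0
  | 1 => 1
  | (k+2) => f (k+1) * cfQ f (k+1) + cfQ f k

lemma cfP_two (f : ℕ → L) (k : ℕ) : cfP f (k+2) = f (k+1) * cfP f (k+1) + cfP f k := rfl
lemma cfQ_two (f : ℕ → L) (k : ℕ) : cfQ f (k+2) = f (k+1) * cfQ f (k+1) + cfQ f k := rfl

lemma cf_det (f : ℕ → L) : ∀ k, cfP f k * cfQ f (k+1) - cfP f (k+1) * cfQ f k = (-1)^k
  | 0 => by simp [cfP, cfQ]
  | (k+1) => by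
      have ih := cf_det f k
      rw [cfP_two, cfQ_two]
      linear_combination (-1 : L) * ih

lemma cf_shift (f : ℕ → L) : ∀ k, cfQ f (k+1) = cfP (fun i => f (i+1)) k ∧
    cfP f (k+1) = f 0 * cfP (fun i => f (i+1)) k + cfQ (fun i => f (i+1)) k
  | 0 => by simp [cfP, cfQ]
  | 1 => by simp [cfP, cfQ]; ring
  | (k+2) => by
      obtain ⟨h1q, h1p⟩ := cf_shift f (k+1)
      obtain ⟨h0q, h0p⟩ := cf_shift f k
      have sq : cfP (fun i => f (i+1)) (k+2)
          = f (k+2) * cfP (fun i => f (i+1)) (k+1) + cfP (fun i => f (i+1)) k := rfl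
      have sp : cfQ (fun i => f (i+1)) (k+2)
          = f (k+2) * cfQ (fun i => f (i+1)) (k+1) + cfQ (fun i => f (i+1)) k := rfl
      constructor
      · rw [cfQ_two, sq, h1q, h0q]
      · rw [cfP_two, sq, sp, h1p, h0p]; ring

end CFAux
namespace PuiseuxCompletion

variable {E : Type u} [Field E] (P : PuiseuxCompletion E)

lemma nu_one : P.ν 1 = 0 := by
  have h := P.ν_mul 1 1 one_ne_zero one_ne_zero
  rw [mul_one] at h; linarith

lemma nu_neg_one : P.ν (-1) = 0 := by
  have h := P.ν_mul (-1) (-1) (by simp) (by simp)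
  rw [neg_mul_neg, mul_one, P.nu_one] at h; linarith

lemma nu_neg {x : P.K} (hx : x ≠ 0) : P.ν (-x) = P.ν x := by
  have h := P.ν_mul (-1) x (by simp) hx
  rw [neg_one_mul, P.nu_neg_one] at h; linarith

lemma nu_inv {x : P.K} (hx : x ≠ 0) : P.ν x⁻¹ = -P.ν x := by
  have h := P.ν_mul x x⁻¹ hx (inv_ne_zero hx)
  rw [mul_inv_cancel₀ hx, P.nu_one] at h; linarith

lemma mono_ne_zero (r : ℚ) : P.mono r ≠ 0 := by
  intro h
  have h1 : P.mono r * P.mono (-r) = 1 := by rw [P.mono_mul, add_neg_cancel, P.mono_zero]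
  rw [h, zero_mul] at h1
  exact zero_ne_one h1

/-- strict ultrametric triangle: if `ν x < ν y` (or `y = 0`) then `ν (x + y) = ν x`. -/
lemma nu_add_left {x y : P.K} (hx : x ≠ 0) (h : y = 0 ∨ (y ≠ 0 ∧ P.ν x < P.ν y)) :
    x + y ≠ 0 ∧ P.ν (x + y) = P.ν x := by
  rcases h with h | ⟨hy, hlt⟩
  · simp [h, hx]
  have hxy : x + y ≠ 0 := by
    intro h0
    have : y = -x := by linear_combination h0
    rw [this, P.nu_neg hx] at hlt
    exact lt_irrefl _ hlt
  refine ⟨hxy, le_antisymm ?_ ?_⟩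
  · have h2 := P.ν_add (x + y) (-y) hxy (neg_ne_zero.2 hy) (by simpa using hx)
    rw [add_neg_cancel_right, P.nu_neg hy] at h2
    rcases min_le_iff.mp h2 with h3 | h3
    · exact h3
    · linarith
  · have h1 := P.ν_add x y hx hy hxy
    rcases le_min_iff.mp (le_refl (min (P.ν x) (P.ν y))) with _
    calc P.ν x = min (P.ν x) (P.ν y) := (min_eq_left hlt.le).symm
      _ ≤ P.ν (x + y) := h1

lemma nu_sum {ι : Type} [DecidableEq ι] (s : Finset ι) (g : ι → P.K) (hne : s.Nonempty)
    (h0 : ∀ i ∈ s, g i ≠ 0)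
    (hd : ∀ i ∈ s, ∀ j ∈ s, i ≠ j → P.ν (g i) ≠ P.ν (g j)) :
    (∑ i ∈ s, g i) ≠ 0 ∧ ∃ i ∈ s, P.ν (∑ j ∈ s, g j) = P.ν (g i) := by
  induction s using Finset.induction_on with
  | empty => exact absurd hne (by simp)
  | @insert a s ha ih =>
    by_cases hs : s.Nonempty
    · obtain ⟨hsum, i0, hi0, hνi0⟩ := ih hs (fun i hi => h0 i (Finset.mem_insert_of_mem hi))
        (fun i hi j hj hij => hd i (Finset.mem_insert_of_mem hi) j (Finset.mem_insert_of_mem hj) hij)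
      rw [Finset.sum_insert ha]
      have hga : g a ≠ 0 := h0 a (Finset.mem_insert_self a s)
      have hdiff : P.ν (g a) ≠ P.ν (∑ j ∈ s, g j) := by
        rw [hνi0]
        exact hd a (Finset.mem_insert_self a s) i0 (Finset.mem_insert_of_mem hi0)
          (fun h => ha (h ▸ hi0))
      rcases lt_or_gt_of_ne hdiff with hlt | hgt
      · obtain ⟨hne', heq'⟩ := P.nu_add_left hga (Or.inr ⟨hsum, hlt⟩)
        exact ⟨hne', a, Finset.mem_insert_self a s, heq'⟩
      · rw [add_comm]
        obtain ⟨hne', heq'⟩ := P.nu_add_left hsum (Or.inr ⟨hga, hgt⟩)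
        exact ⟨hne', i0, Finset.mem_insert_of_mem hi0, by rw [heq', hνi0]⟩
    · rw [Finset.not_nonempty_iff_eq_empty] at hs
      subst hs
      simp only [Finset.sum_insert (Finset.notMem_empty a), Finset.sum_empty, add_zero]
      exact ⟨h0 a (Finset.mem_insert_self a _), a, Finset.mem_insert_self a _, rfl⟩

end PuiseuxCompletion
namespace PuiseuxCompletion

variable {E : Type u} [Field E] (P : PuiseuxCompletion E)

/-- The monoid hom `Multiplicative ℚ →* K̂` sending `r` to `mono r`. -/
def monoHom : Multiplicative ℚ →* P.K where
  toFun r := P.mono r.toAdd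
  map_one' := P.mono_zero
  map_mul' x y := (P.mono_mul x.toAdd y.toAdd).symm

/-- The ring hom `AddMonoidAlgebra E ℚ →+* K̂`. -/
noncomputable def phi : AddMonoidAlgebra E ℚ →+* P.K :=
  AddMonoidAlgebra.liftNCRingHom P.emb P.monoHom (fun _ _ => Commute.all _ _)

lemma phi_single (r : ℚ) (c : E) :
    P.phi (AddMonoidAlgebra.single r c) = P.emb c * P.mono r := by
  classical
  simp [phi, AddMonoidAlgebra.liftNCRingHom, monoHom]

/-- The subring of `AddMonoidAlgebra E ℚ` of elements with nonnegative support. -/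
def nonnegSupp : Subring (AddMonoidAlgebra E ℚ) where
  carrier := {d | ∀ r ∈ d.coeff.support, (0:ℚ) ≤ r}
  zero_mem' := by simp
  one_mem' := by
    intro r hr
    classical
    rw [AddMonoidAlgebra.one_def] at hr
    have h := Finsupp.support_single_subset hr
    simp only [Finset.mem_singleton] at h
    simp [h]
  add_mem' := by
    intro a b ha hb r hr
    classical
    rcases Finset.mem_union.mp (Finsupp.support_add hr) with h | h
    · exact ha r h
    · exact hb r h
  neg_mem' := by
    intro a ha r hr
    rw [AddMonoidAlgebra.coeff_neg, Finsupp.support_neg] at hr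
    exact ha r hr
  mul_mem' := by
    intro a b ha hb r hr
    classical
    rcases Finset.mem_add.mp (AddMonoidAlgebra.support_coeff_mul_subset a b hr) with ⟨x, hx, y, hy, rfl⟩
    exact add_nonneg (ha x hx) (hb y hy)

lemma abar_le : P.Abar ≤ (nonnegSupp (E := E)).map P.phi := by
  rw [Abar, Subring.closure_le]
  rintro x (⟨e, rfl⟩ | ⟨r, hr, rfl⟩)
  · exact ⟨AddMonoidAlgebra.single 0 e, by
      classical
      refine ⟨fun s hs => ?_, by rw [phi_single, P.mono_zero, mul_one]⟩
      have := Finsupp.support_single_subset hs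
      simp only [Finset.mem_singleton] at this
      simp [this]⟩
  · exact ⟨AddMonoidAlgebra.single r 1, by
      classical
      refine ⟨fun s hs => ?_, by rw [phi_single, map_one, one_mul]⟩
      have := Finsupp.support_single_subset hs
      simp only [Finset.mem_singleton] at this
      rw [this]; exact hr⟩

lemma abar_nu_nonpos {x : P.K} (hx : x ∈ P.Abar) (hx0 : x ≠ 0) : P.ν x ≤ 0 := by
  classical
  obtain ⟨d, hd, rfl⟩ := P.abar_le hx
  have hrep : P.phi d = ∑ r ∈ d.coeff.support, P.emb (d.coeff r) * P.mono r := by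
    conv_lhs => rw [← AddMonoidAlgebra.ofCoeff_coeff d, ← Finsupp.sum_single d.coeff]
    rw [Finsupp.sum, AddMonoidAlgebra.ofCoeff_sum, map_sum]
    exact Finset.sum_congr rfl fun r _ => P.phi_single r (d.coeff r)
  have hsupp : d.coeff.support.Nonempty := by
    by_contra h
    rw [Finset.not_nonempty_iff_eq_empty, Finsupp.support_eq_empty, AddMonoidAlgebra.coeff_eq_zero] at h
    subst h
    exact hx0 (map_zero P.phi)
  have hterm : ∀ r ∈ d.coeff.support, P.emb (d.coeff r) * P.mono r ≠ 0 := by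
    intro r hr
    exact mul_ne_zero (fun h => Finsupp.mem_support_iff.mp hr (by
      have : Function.Injective P.emb := P.emb.injective
      rw [← map_zero P.emb] at h
      exact this h)) (P.mono_ne_zero r)
  have hνterm : ∀ r ∈ d.coeff.support, P.ν (P.emb (d.coeff r) * P.mono r) = -r := by
    intro r hr
    rw [P.ν_mul _ _ (fun h => Finsupp.mem_support_iff.mp hr (by
      rw [← map_zero P.emb] at h; exact P.emb.injective h)) (P.mono_ne_zero r),
      P.ν_emb _ (Finsupp.mem_support_iff.mp hr), P.ν_mono, zero_add]
  obtain ⟨_, r0, hr0, hν⟩ := P.nu_sum d.coeff.support (fun r => P.emb (d.coeff r) * P.mono r) hsupp hterm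
    (fun i hi j hj hij => by rw [hνterm i hi, hνterm j hj]; exact fun h => hij (by linarith))
  rw [hrep, hν, hνterm r0 hr0]
  simpa using hd r0 hr0

end PuiseuxCompletion
namespace PuiseuxCompletion

open CFAux

variable {E : Type u} [Field E] (P : PuiseuxCompletion E)

lemma nu_cfQ (f : ℕ → P.K) (m : ℕ) (hf : ∀ i, 1 ≤ i → i ≤ m → f i ≠ 0 ∧ P.ν (f i) < 0) :
    ∀ k, k ≤ m → cfQ f (k+1) ≠ 0 ∧ P.ν (cfQ f (k+1)) = ∑ i ∈ Finset.Icc 1 k, P.ν (f i)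
  | 0, _ => by
      simp [cfQ, P.nu_one]
  | 1, h1 => by
      have hf1 := hf 1 le_rfl h1
      have : cfQ f 2 = f 1 := by rw [cfQ_two]; simp [cfQ]
      rw [this]
      simp [hf1.1]
  | (k+2), hk => by
      obtain ⟨hA, hA'⟩ := nu_cfQ f m hf (k+1) (by omega)
      obtain ⟨hB, hB'⟩ := nu_cfQ f m hf k (by omega)
      have hf1 := hf (k+1) (by omega) (by omega)
      have hf2 := hf (k+2) (by omega) (by omega)
      have hx : f (k+2) * cfQ f (k+2) ≠ 0 := mul_ne_zero hf2.1 hA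
      have hνx : P.ν (f (k+2) * cfQ f (k+2)) = P.ν (f (k+2)) + P.ν (cfQ f (k+2)) :=
        P.ν_mul _ _ hf2.1 hA
      have hsum1 : ∑ i ∈ Finset.Icc 1 (k+1), P.ν (f i)
          = (∑ i ∈ Finset.Icc 1 k, P.ν (f i)) + P.ν (f (k+1)) :=
        Finset.sum_Icc_succ_top (by omega) _
      have hsum2 : ∑ i ∈ Finset.Icc 1 (k+2), P.ν (f i)
          = (∑ i ∈ Finset.Icc 1 (k+1), P.ν (f i)) + P.ν (f (k+2)) :=
        Finset.sum_Icc_succ_top (by omega) _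
      have hlt : P.ν (f (k+2) * cfQ f (k+2)) < P.ν (cfQ f (k+1)) := by
        rw [hνx, hA', hB', hsum1]
        linarith [hf1.2, hf2.2]
      obtain ⟨hne, heq⟩ := P.nu_add_left hx (Or.inr ⟨hB, hlt⟩)
      rw [cfQ_two]
      exact ⟨hne, by rw [heq, hνx, hA', hsum2, hsum1]; ring⟩

lemma nu_cfP (f : ℕ → P.K) (m : ℕ) (hf : ∀ i, i ≤ m → f i ≠ 0 ∧ P.ν (f i) < 0) :
    ∀ k, k ≤ m → cfP f (k+1) ≠ 0 ∧ P.ν (cfP f (k+1)) = ∑ i ∈ Finset.Icc 0 k, P.ν (f i)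
  | 0, h0 => by
      have := hf 0 (by omega)
      simp [cfP, this.1]
  | 1, h1 => by
      have hf0 := hf 0 (by omega)
      have hf1 := hf 1 h1
      have e : cfP f 2 = f 1 * f 0 + 1 := by rw [cfP_two]; simp [cfP]
      rw [e]
      have hx : f 1 * f 0 ≠ 0 := mul_ne_zero hf1.1 hf0.1
      have hνx := P.ν_mul (f 1) (f 0) hf1.1 hf0.1
      obtain ⟨hne, heq⟩ := P.nu_add_left hx
        (Or.inr ⟨one_ne_zero, by rw [hνx, P.nu_one]; linarith [hf0.2, hf1.2]⟩)
      refine ⟨hne, ?_⟩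
      rw [heq, hνx]
      rw [show Finset.Icc 0 1 = {0, 1} from rfl]
      simp [Finset.sum_insert]
      ring
  | (k+2), hk => by
      obtain ⟨hA, hA'⟩ := nu_cfP f m hf (k+1) (by omega)
      obtain ⟨hB, hB'⟩ := nu_cfP f m hf k (by omega)
      have hf1 := hf (k+1) (by omega)
      have hf2 := hf (k+2) (by omega)
      have hx : f (k+2) * cfP f (k+2) ≠ 0 := mul_ne_zero hf2.1 hA
      have hνx : P.ν (f (k+2) * cfP f (k+2)) = P.ν (f (k+2)) + P.ν (cfP f (k+2)) :=
        P.ν_mul _ _ hf2.1 hA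
      have hsum1 : ∑ i ∈ Finset.Icc 0 (k+1), P.ν (f i)
          = (∑ i ∈ Finset.Icc 0 k, P.ν (f i)) + P.ν (f (k+1)) :=
        Finset.sum_Icc_succ_top (by omega) _
      have hsum2 : ∑ i ∈ Finset.Icc 0 (k+2), P.ν (f i)
          = (∑ i ∈ Finset.Icc 0 (k+1), P.ν (f i)) + P.ν (f (k+2)) :=
        Finset.sum_Icc_succ_top (by omega) _
      have hlt : P.ν (f (k+2) * cfP f (k+2)) < P.ν (cfP f (k+1)) := by
        rw [hνx, hA', hB', hsum1]
        linarith [hf1.2, hf2.2]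
      obtain ⟨hne, heq⟩ := P.nu_add_left hx (Or.inr ⟨hB, hlt⟩)
      rw [cfP_two]
      exact ⟨hne, by rw [heq, hνx, hA', hsum2, hsum1]; ring⟩

lemma cf_eval (m : ℕ) : ∀ (f : ℕ → P.K), (∀ i, 1 ≤ i → i ≤ m → f i ≠ 0 ∧ P.ν (f i) < 0) →
    cfEval (List.ofFn fun i : Fin (m+1) => f i) = cfP f (m+1) / cfQ f (m+1) := by
  induction m with
  | zero =>
    intro f _
    simp [cfEval, cfP, cfQ, List.ofFn_succ]
  | succ m ih =>
    intro f hf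
    rw [List.ofFn_succ]
    show cfEval (f 0 :: _) = _
    rw [cfEval]
    have hg : ∀ i, 1 ≤ i → i ≤ m → (fun j => f (j+1)) i ≠ 0 ∧ P.ν ((fun j => f (j+1)) i) < 0 :=
      fun i _ h2 => hf (i+1) (by omega) (by omega)
    have hg' : ∀ i, i ≤ m → (fun j => f (j+1)) i ≠ 0 ∧ P.ν ((fun j => f (j+1)) i) < 0 :=
      fun i h2 => hf (i+1) (by omega) (by omega)
    have ihg := ih (fun j => f (j+1)) hg
    rw [show (fun i : Fin (m+1) => f ((i.succ : Fin (m+2)) : ℕ))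
        = fun i : Fin (m+1) => (fun j => f (j+1)) (i : ℕ) from funext fun i => by
          simp [Fin.val_succ], ihg]
    obtain ⟨hPg, -⟩ := P.nu_cfP (fun j => f (j+1)) m hg' m le_rfl
    obtain ⟨s1, s2⟩ := CFAux.cf_shift f (m+1)
    rw [inv_div, s1, s2]
    field_simp

end PuiseuxCompletion
namespace PuiseuxCompletion

open CFAux

variable {E : Type u} [Field E] (P : PuiseuxCompletion E)

lemma cf_mem (f : ℕ → P.K) (m : ℕ) (hf : ∀ i, i ≤ m → f i ∈ P.Abar) :
    ∀ k, k ≤ m + 1 → cfP f k ∈ P.Abar ∧ cfQ f k ∈ P.Abar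
  | 0, _ => by
      constructor
      · show (1 : P.K) ∈ P.Abar; exact one_mem _
      · show (0 : P.K) ∈ P.Abar; exact zero_mem _
  | 1, h => by
      constructor
      · show f 0 ∈ P.Abar; exact hf 0 (by omega)
      · show (1 : P.K) ∈ P.Abar; exact one_mem _
  | (k+2), hk => by
      obtain ⟨h1p, h1q⟩ := cf_mem f m hf (k+1) (by omega)
      obtain ⟨h0p, h0q⟩ := cf_mem f m hf k (by omega)
      have hfk : f (k+1) ∈ P.Abar := hf (k+1) (by omega)
      rw [cfP_two, cfQ_two]
      exact ⟨add_mem (mul_mem hfk h1p) h0p, add_mem (mul_mem hfk h1q) h0q⟩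

lemma approx_part {x g : P.K} (hx : x ≠ 0) (hν : P.ν x < 0)
    (h : x = g ∨ 0 < P.ν (x - g)) : g ≠ 0 ∧ P.ν g = P.ν x := by
  by_cases hxg : x = g
  · exact ⟨hxg ▸ hx, by rw [← hxg]⟩
  · have hsub : x - g ≠ 0 := sub_ne_zero.mpr hxg
    have hpos : 0 < P.ν (x - g) := h.resolve_left hxg
    have key := P.nu_add_left hx
      (Or.inr ⟨neg_ne_zero.mpr hsub, by rw [P.nu_neg hsub]; linarith⟩)
    have he : x + -(x - g) = g := by ring
    rw [he] at key
    exact key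

end PuiseuxCompletion

open PuiseuxCompletion in
open CFAux in
/-- if `p_n / q_n = [f₀, …, f_n]_{ev}` with `p_n, q_n ∈ Ā`
comaximal, then `deg q_n = Σ_{i=1}^n deg f_i`, and
`ν (z - p_n/q_n) = deg f_{n+1} + 2 deg q_n` whenever `f_{n+1}` is defined. -/
theorem statement19 {E : Type u} [Field E] (P : PuiseuxCompletion E)
    (z : P.K) (f zs : ℕ → P.K) (n : ℕ)
    (h0 : zs 0 = z) (hstep : ∀ i < n, P.CFStep f zs i)
    (hfn : f n ∈ P.Abar) (hcn : zs n = f n ∨ 0 < P.ν (zs n - f n))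
    (p q : P.K) (hp : p ∈ P.Abar) (hq : q ∈ P.Abar) (hq0 : q ≠ 0)
    (hcomax : ∃ u v : P.K, u ∈ P.Abar ∧ v ∈ P.Abar ∧ u * p + v * q = 1)
    (hpq : p / q = P.approx f n) :
    P.deg q = ∑ i ∈ Finset.Icc 1 n, P.deg (f i) ∧
      ((∀ i ≤ n, P.CFStep f zs i) → f (n + 1) ∈ P.Abar →
        (zs (n + 1) = f (n + 1) ∨ 0 < P.ν (zs (n + 1) - f (n + 1))) →
        P.ν (z - p / q) = P.deg (f (n + 1)) + 2 * P.deg q) := by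
  classical
  -- facts about zs at indices 1..n
  have hzf : ∀ i, 1 ≤ i → i ≤ n → zs i ≠ 0 ∧ P.ν (zs i) < 0 := by
    intro i h1 h2
    obtain ⟨-, hpos, hne, hrec⟩ := hstep (i-1) (by omega)
    have hi : i - 1 + 1 = i := by omega
    rw [hi] at hrec
    have hsub : zs (i-1) - f (i-1) ≠ 0 := sub_ne_zero.mpr hne
    refine ⟨by rw [hrec]; exact inv_ne_zero hsub, by rw [hrec, P.nu_inv hsub]; linarith⟩
  have hf' : ∀ i, 1 ≤ i → i ≤ n → f i ≠ 0 ∧ P.ν (f i) < 0 := by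
    intro i h1 h2
    obtain ⟨hzne, hzν⟩ := hzf i h1 h2
    have hd : zs i = f i ∨ 0 < P.ν (zs i - f i) := by
      rcases Nat.lt_or_ge i n with h | h
      · exact Or.inr (hstep i h).2.1
      · have hin : i = n := by omega
        subst hin; exact hcn
    obtain ⟨hgne, hgν⟩ := P.approx_part hzne hzν hd
    exact ⟨hgne, by rw [hgν]; exact hzν⟩
  obtain ⟨hQ1ne, hQ1ν⟩ := P.nu_cfQ f n hf' n le_rfl
  have happrox : P.approx f n = cfP f (n+1) / cfQ f (n+1) := P.cf_eval n f hf'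
  have hmem : ∀ i, i ≤ n → f i ∈ P.Abar := by
    intro i hi
    rcases Nat.lt_or_ge i n with h | h
    · exact (hstep i h).1
    · have : i = n := by omega
      subst this; exact hfn
  obtain ⟨hP1mem, hQ1mem⟩ := P.cf_mem f n hmem (n+1) le_rfl
  obtain ⟨hP0mem, hQ0mem⟩ := P.cf_mem f n hmem n (by omega)
  have hcross : p * cfQ f (n+1) = cfP f (n+1) * q :=
    (div_eq_div_iff hq0 hQ1ne).mp (hpq.trans happrox)
  obtain ⟨u, v, hu, hv, huv⟩ := hcomax
  have det := cf_det f n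
  have h1 : ((-1 : P.K)^n) * ((-1 : P.K)^n) = 1 := by
    rw [← pow_add]
    exact Even.neg_one_pow ⟨n, rfl⟩
  set a := u * cfP f (n+1) + v * cfQ f (n+1) with ha_def
  set b := (-1 : P.K)^n * (cfP f n * q - cfQ f n * p) with hb_def
  have hamem : a ∈ P.Abar := add_mem (mul_mem hu hP1mem) (mul_mem hv hQ1mem)
  have hneg : (-1 : P.K)^n ∈ P.Abar := pow_mem (neg_mem (one_mem _)) n
  have hbmem : b ∈ P.Abar := mul_mem hneg (sub_mem (mul_mem hP0mem hq) (mul_mem hQ0mem hp))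
  have ha : cfQ f (n+1) = a * q := by
    rw [ha_def]
    linear_combination (-(cfQ f (n+1))) * huv + u * hcross
  have hb : q = b * cfQ f (n+1) := by
    rw [hb_def]
    linear_combination ((-1 : P.K)^n * cfQ f n) * hcross - ((-1 : P.K)^n * q) * det - q * h1
  have hba : b * a = 1 := by
    have h2 : (b * a) * q = 1 * q := by
      rw [one_mul]
      calc (b * a) * q = b * (a * q) := by ring
        _ = b * cfQ f (n+1) := by rw [← ha]
        _ = q := hb.symm
    exact mul_right_cancel₀ hq0 h2
  have hb0 : b ≠ 0 := left_ne_zero_of_mul_eq_one hba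
  have ha0 : a ≠ 0 := right_ne_zero_of_mul_eq_one hba
  have hνsum : P.ν b + P.ν a = 0 := by
    have := P.ν_mul b a hb0 ha0
    rw [hba, P.nu_one] at this
    linarith
  have hνa : P.ν a = 0 := by
    have h3 := P.abar_nu_nonpos hamem ha0
    have h4 := P.abar_nu_nonpos hbmem hb0
    linarith
  have hνq : P.ν q = P.ν (cfQ f (n+1)) := by
    have h5 := P.ν_mul a q ha0 hq0
    rw [← ha, hνa] at h5
    linarith
  constructor
  · simp only [PuiseuxCompletion.deg]
    rw [hνq, hQ1ν, ← Finset.sum_neg_distrib]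
  · intro hstep' hfm hcm
    obtain ⟨-, hposn, hnen, hrecn⟩ := hstep' n le_rfl
    have hsubn : zs n - f n ≠ 0 := sub_ne_zero.mpr hnen
    have hw0 : zs (n+1) ≠ 0 := by rw [hrecn]; exact inv_ne_zero hsubn
    have hwv : P.ν (zs (n+1)) < 0 := by rw [hrecn, P.nu_inv hsubn]; linarith
    obtain ⟨hf1ne, hf1ν⟩ := P.approx_part hw0 hwv hcm
    have key : ∀ k, k ≤ n →
        zs 0 * (cfQ f (k+1) * zs (k+1) + cfQ f k) = cfP f (k+1) * zs (k+1) + cfP f k := by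
      intro k
      induction k with
      | zero =>
        intro _
        obtain ⟨-, -, hne0, hrec0⟩ := hstep' 0 (by omega)
        have hs0 : zs 0 - f 0 ≠ 0 := sub_ne_zero.mpr hne0
        have hk1 : (zs 0 - f 0) * zs 1 = 1 := by rw [hrec0]; exact mul_inv_cancel₀ hs0
        show zs 0 * (cfQ f 1 * zs 1 + cfQ f 0) = cfP f 1 * zs 1 + cfP f 0
        simp only [cfP, cfQ]
        linear_combination hk1
      | succ k ihk =>
        intro hk
        have ih := ihk (by omega)
        obtain ⟨-, -, hnek, hreck⟩ := hstep' (k+1) hk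
        have hsk : zs (k+1) - f (k+1) ≠ 0 := sub_ne_zero.mpr hnek
        have hkey : (zs (k+1) - f (k+1)) * zs (k+2) = 1 := by
          rw [hreck]; exact mul_inv_cancel₀ hsk
        rw [cfQ_two, cfP_two]
        linear_combination zs (k+2) * ih + (cfP f (k+1) - zs 0 * cfQ f (k+1)) * hkey
    have hzn := key n le_rfl
    rw [h0] at hzn
    have hwne : cfQ f (n+1) * zs (n+1) ≠ 0 := mul_ne_zero hQ1ne hw0
    have hνx : P.ν (cfQ f (n+1) * zs (n+1)) = P.ν (cfQ f (n+1)) + P.ν (zs (n+1)) :=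
      P.ν_mul _ _ hQ1ne hw0
    have hden : cfQ f (n+1) * zs (n+1) + cfQ f n ≠ 0 ∧
        P.ν (cfQ f (n+1) * zs (n+1) + cfQ f n) = P.ν (cfQ f (n+1) * zs (n+1)) := by
      apply P.nu_add_left hwne
      rcases n with _ | m
      · left; rfl
      · right
        obtain ⟨hQ0ne, hQ0ν⟩ := P.nu_cfQ f (m+1) hf' m (by omega)
        refine ⟨hQ0ne, ?_⟩
        have hs := Finset.sum_Icc_succ_top (show 1 ≤ m + 1 by omega) (fun i => P.ν (f i))
        have hfm1 := hf' (m+1) (by omega) le_rfl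
        rw [hνx, hQ1ν, hQ0ν, hs]
        linarith [hwv]
    have hX : (cfQ f (n+1) * zs (n+1) + cfQ f n) * cfQ f (n+1) ≠ 0 :=
      mul_ne_zero hden.1 hQ1ne
    have hdiff : (z - cfP f (n+1) / cfQ f (n+1)) *
        ((cfQ f (n+1) * zs (n+1) + cfQ f n) * cfQ f (n+1)) = (-1)^n := by
      have e : cfP f (n+1) / cfQ f (n+1) * cfQ f (n+1) = cfP f (n+1) := div_mul_cancel₀ _ hQ1ne
      linear_combination cfQ f (n+1) * hzn + det - (cfQ f (n+1) * zs (n+1) + cfQ f n) * e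
    have heq : z - p / q = (-1 : P.K)^n / ((cfQ f (n+1) * zs (n+1) + cfQ f n) * cfQ f (n+1)) := by
      rw [hpq, happrox, eq_div_iff hX]
      exact hdiff
    have hν1 : P.ν ((-1 : P.K)^n) = 0 := by
      rcases neg_one_pow_eq_or P.K n with h | h <;> rw [h]
      · exact P.nu_one
      · exact P.nu_neg_one
    have hne1 : ((-1 : P.K)^n) ≠ 0 := pow_ne_zero n (neg_ne_zero.mpr one_ne_zero)
    have hνX : P.ν ((cfQ f (n+1) * zs (n+1) + cfQ f n) * cfQ f (n+1)) =
        2 * P.ν (cfQ f (n+1)) + P.ν (zs (n+1)) := by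
      rw [P.ν_mul _ _ hden.1 hQ1ne, hden.2, hνx]
      ring
    have : P.ν (z - p / q) = -(2 * P.ν (cfQ f (n+1)) + P.ν (zs (n+1))) := by
      rw [heq, div_eq_mul_inv, P.ν_mul _ _ hne1 (inv_ne_zero hX), hν1, P.nu_inv hX, hνX]
      ring
    rw [this]
    simp only [PuiseuxCompletion.deg]
    rw [hνq, hf1ν]
    ring
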